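/- Near-optimality certificate via measures: suppose a ∈ ℝ^m and signed Borel measures μ, ν on [−1,1] satisfy μ + ν = ρ − Σᵢ aᵢ λᵢ and ∫ v dμ = 0 for all polynomials v of degree < n, where ρ represents Q(f) = ∫ f dρ and λᵢ represents ℓᵢ(f) = ∫ f dλᵢ. Then for every f ∈ C[−1,1] with dist_∞(f, P_n) ≤ ε and ‖f‖_∞ ≤ κ, one has |Q(f) − Σᵢ aᵢ ℓᵢ(f)| ≤ ε |μ|([−1,1]) + κ |ν|([−1,1]). -/

import Mathlib

open MeasureTheory
open scoped BigOperators

abbrev X := Set.Icc (-1 : ℝ) 1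

/-- Integral of a function against a signed measure, via its Jordan decomposition. -/
noncomputable def sInt (σ : SignedMeasure (Set.Icc (-1 : ℝ) 1))
    (f : Set.Icc (-1 : ℝ) 1 → ℝ) : ℝ :=
  (∫ t, f t ∂σ.toJordanDecomposition.posPart) -
    ∫ t, f t ∂σ.toJordanDecomposition.negPart

lemma myInteg (P : Measure X) [IsFiniteMeasure P] {f : X → ℝ} (hf : Continuous f) :
    Integrable f P :=
  hf.integrable_of_hasCompactSupport
    (IsCompact.of_isClosed_subset isCompact_univ (isClosed_tsupport f) (Set.subset_univ _))

lemma key (σ : SignedMeasure X) (P N : Measure X) [IsFiniteMeasure P] [IsFiniteMeasure N]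
    (h : σ = P.toSignedMeasure - N.toSignedMeasure) {f : X → ℝ} (hf : Continuous f) :
    sInt σ f = (∫ t, f t ∂P) - ∫ t, f t ∂N := by
  have hσ : σ.toJordanDecomposition.posPart.toSignedMeasure
      - σ.toJordanDecomposition.negPart.toSignedMeasure = σ :=
    σ.toSignedMeasure_toJordanDecomposition
  have hm : σ.toJordanDecomposition.posPart + N = P + σ.toJordanDecomposition.negPart := by
    rw [← Measure.toSignedMeasure_eq_toSignedMeasure_iff,
      Measure.toSignedMeasure_add, Measure.toSignedMeasure_add]
    exact sub_eq_sub_iff_add_eq_add.mp (hσ.trans h)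
  have := congrArg (fun Q => ∫ t, f t ∂Q) hm
  simp only [integral_add_measure (myInteg _ hf) (myInteg _ hf)] at this
  unfold sInt
  linarith

lemma sInt_add (σ τ : SignedMeasure X) {f : X → ℝ} (hf : Continuous f) :
    sInt (σ + τ) f = sInt σ f + sInt τ f := by
  have h : σ + τ =
      (σ.toJordanDecomposition.posPart + τ.toJordanDecomposition.posPart).toSignedMeasure -
      (σ.toJordanDecomposition.negPart + τ.toJordanDecomposition.negPart).toSignedMeasure := by
    rw [Measure.toSignedMeasure_add, Measure.toSignedMeasure_add]
    have h1 := σ.toSignedMeasure_toJordanDecomposition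
    have h2 := τ.toSignedMeasure_toJordanDecomposition
    unfold MeasureTheory.JordanDecomposition.toSignedMeasure at h1 h2
    conv_lhs => rw [← h1, ← h2]
    abel
  rw [key _ _ _ h hf, integral_add_measure (myInteg _ hf) (myInteg _ hf),
    integral_add_measure (myInteg _ hf) (myInteg _ hf)]
  unfold sInt; ring

lemma sInt_smul (r : ℝ) (σ : SignedMeasure X) (f : X → ℝ) :
    sInt (r • σ) f = r * sInt σ f := by
  unfold sInt
  rcases le_or_gt 0 r with hr | hr
  · rw [SignedMeasure.toJordanDecomposition_smul_real,
      JordanDecomposition.real_smul_posPart_nonneg _ _ hr,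
      JordanDecomposition.real_smul_negPart_nonneg _ _ hr,
      integral_smul_nnreal_measure, integral_smul_nnreal_measure]
    simp [NNReal.smul_def, Real.coe_toNNReal r hr]; ring
  · rw [SignedMeasure.toJordanDecomposition_smul_real,
      JordanDecomposition.real_smul_posPart_neg _ _ hr,
      JordanDecomposition.real_smul_negPart_neg _ _ hr,
      integral_smul_nnreal_measure, integral_smul_nnreal_measure]
    simp [NNReal.smul_def, Real.coe_toNNReal _ (by linarith : (0:ℝ) ≤ -r)]; ring

lemma sInt_neg (σ : SignedMeasure X) (f : X → ℝ) : sInt (-σ) f = - sInt σ f := by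
  have := sInt_smul (-1) σ f
  have e : ((-1:ℝ) • σ) = -σ := by ext s hs; simp
  rw [e] at this; linarith

lemma sInt_sub' (σ τ : SignedMeasure X) {f : X → ℝ} (hf : Continuous f) :
    sInt (σ - τ) f = sInt σ f - sInt τ f := by
  rw [sub_eq_add_neg, sInt_add _ _ hf, sInt_neg]; ring

lemma sInt_sum {k : ℕ} (c : Fin k → ℝ) (lam : Fin k → SignedMeasure X) {f : X → ℝ}
    (hf : Continuous f) :
    sInt (∑ i, c i • lam i) f = ∑ i, c i * sInt (lam i) f := by
  classical
  induction (Finset.univ : Finset (Fin k)) using Finset.induction with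
  | empty => simp [sInt, MeasureTheory.SignedMeasure.toJordanDecomposition_zero]
  | insert x s hx ih =>
      rw [Finset.sum_insert hx, Finset.sum_insert hx, sInt_add _ _ hf, sInt_smul, ih]

lemma sInt_bound (σ : SignedMeasure X) (f : C(X, ℝ)) :
    |sInt σ f| ≤ ‖f‖ * (σ.totalVariation Set.univ).toReal := by
  set P := σ.toJordanDecomposition.posPart
  set N := σ.toJordanDecomposition.negPart
  have hP : |∫ t, f t ∂P| ≤ ‖f‖ * (P Set.univ).toReal := by
    calc |∫ t, f t ∂P| = ‖∫ t, f t ∂P‖ := (Real.norm_eq_abs _).symm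
    _ ≤ ∫ t, ‖f t‖ ∂P := norm_integral_le_integral_norm _
    _ ≤ ∫ _t, ‖f‖ ∂P := integral_mono (myInteg _ f.continuous).norm (integrable_const _)
        (fun t => f.norm_coe_le_norm t)
    _ = (P Set.univ).toReal * ‖f‖ := by rw [integral_const]; simp [smul_eq_mul, measureReal_def]
    _ = ‖f‖ * (P Set.univ).toReal := mul_comm _ _
  have hN : |∫ t, f t ∂N| ≤ ‖f‖ * (N Set.univ).toReal := by
    calc |∫ t, f t ∂N| = ‖∫ t, f t ∂N‖ := (Real.norm_eq_abs _).symm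
    _ ≤ ∫ t, ‖f t‖ ∂N := norm_integral_le_integral_norm _
    _ ≤ ∫ _t, ‖f‖ ∂N := integral_mono (myInteg _ f.continuous).norm (integrable_const _)
        (fun t => f.norm_coe_le_norm t)
    _ = (N Set.univ).toReal * ‖f‖ := by rw [integral_const]; simp [smul_eq_mul, measureReal_def]
    _ = ‖f‖ * (N Set.univ).toReal := mul_comm _ _
  have htv : (σ.totalVariation Set.univ).toReal
      = (P Set.univ).toReal + (N Set.univ).toReal := by
    rw [SignedMeasure.totalVariation, Measure.add_apply,
      ENNReal.toReal_add (measure_ne_top _ _) (measure_ne_top _ _)]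
  calc |sInt σ f| ≤ |∫ t, f t ∂P| + |∫ t, f t ∂N| := abs_sub _ _
  _ ≤ ‖f‖ * (P Set.univ).toReal + ‖f‖ * (N Set.univ).toReal := add_le_add hP hN
  _ = ‖f‖ * (σ.totalVariation Set.univ).toReal := by rw [htv]; ring

/-- The subset of `C[−1,1]` consisting of (restrictions of) polynomials of degree `< n`. -/
def polySet (n : ℕ) : Set C(Set.Icc (-1 : ℝ) 1, ℝ) :=
  {g | ∃ p : Polynomial ℝ, p.degree < (n : ℕ) ∧ ∀ t, g t = p.eval (t : ℝ)}


lemma polySet_nonempty (n : ℕ) : (polySet n).Nonempty :=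
  ⟨0, 0, lt_of_eq_of_lt Polynomial.degree_zero (WithBot.bot_lt_coe n), fun t => by simp⟩

lemma sInt_fun_sub (σ : SignedMeasure X) {f g : X → ℝ} (hf : Continuous f)
    (hg : Continuous g) :
    sInt σ (fun t => f t - g t) = sInt σ f - sInt σ g := by
  unfold sInt
  rw [integral_sub (myInteg _ hf) (myInteg _ hg), integral_sub (myInteg _ hf) (myInteg _ hg)]
  ring

/-- Near-optimality certificate via measures: if `μ + ν = ρ − Σᵢ aᵢ λᵢ` and `μ` annihilates
polynomials of degree `< n`, then for every `f` with `dist_∞(f, P_n) ≤ ε` and `‖f‖_∞ ≤ κ`,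
`|Q(f) − Σᵢ aᵢ ℓᵢ(f)| ≤ ε|μ|([−1,1]) + κ|ν|([−1,1])`. -/
theorem stmt_15 {m : ℕ} (n : ℕ) (ε κ : ℝ) (hε : 0 < ε) (hκ : 0 < κ)
    (ρ : SignedMeasure (Set.Icc (-1 : ℝ) 1))
    (lam : Fin m → SignedMeasure (Set.Icc (-1 : ℝ) 1))
    (a : Fin m → ℝ) (μ ν : SignedMeasure (Set.Icc (-1 : ℝ) 1))
    (hsum : μ + ν = ρ - ∑ i, a i • lam i)
    (hμ : ∀ p : Polynomial ℝ, p.degree < (n : ℕ) →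
      sInt μ (fun t => p.eval (t : ℝ)) = 0) :
    ∀ f : C(Set.Icc (-1 : ℝ) 1, ℝ),
      Metric.infDist f (polySet n) ≤ ε → ‖f‖ ≤ κ →
      |sInt ρ f - ∑ i, a i * sInt (lam i) f|
        ≤ ε * (μ.totalVariation Set.univ).toReal
          + κ * (ν.totalVariation Set.univ).toReal := by
  intro f hdist hnorm
  have hcont : Continuous (f : X → ℝ) := f.continuous
  set Mμ := (μ.totalVariation Set.univ).toReal with hMμ
  set Mν := (ν.totalVariation Set.univ).toReal with hMν
  have hMμ0 : 0 ≤ Mμ := ENNReal.toReal_nonneg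
  have hMν0 : 0 ≤ Mν := ENNReal.toReal_nonneg
  have e1 : sInt ρ f - ∑ i, a i * sInt (lam i) f = sInt μ f + sInt ν f := by
    rw [← sInt_sum a lam hcont, ← sInt_sub' _ _ hcont, ← hsum, sInt_add _ _ hcont]
  rw [e1]
  have hbound : ∀ δ : ℝ, 0 < δ →
      |sInt μ ⇑f + sInt ν ⇑f| ≤ (ε + δ) * Mμ + κ * Mν := by
    intro δ hδ
    obtain ⟨g, hg, hgd⟩ := (Metric.infDist_lt_iff (polySet_nonempty n)).mp
      (lt_of_le_of_lt hdist (by linarith : ε < ε + δ))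
    obtain ⟨p, hpdeg, hpg⟩ := hg
    have hgcont : Continuous (g : X → ℝ) := g.continuous
    have hμg : sInt μ ⇑g = 0 := by
      have : (⇑g : X → ℝ) = fun t => p.eval ((t : X) : ℝ) := funext hpg
      rw [this]; exact hμ p hpdeg
    have hμf : sInt μ ⇑f = sInt μ ⇑(f - g) := by
      have : (⇑(f - g) : X → ℝ) = fun t => f t - g t := by ext t; simp
      rw [this, sInt_fun_sub _ hcont hgcont, hμg, sub_zero]
    have h1 : |sInt μ ⇑(f - g)| ≤ ‖f - g‖ * Mμ := sInt_bound μ (f - g)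
    have h2 : |sInt ν ⇑f| ≤ ‖f‖ * Mν := sInt_bound ν f
    have hfg : ‖f - g‖ ≤ ε + δ := by
      rw [← dist_eq_norm]; exact le_of_lt hgd
    calc |sInt μ ⇑f + sInt ν ⇑f| ≤ |sInt μ ⇑f| + |sInt ν ⇑f| := abs_add_le _ _
    _ = |sInt μ ⇑(f - g)| + |sInt ν ⇑f| := by rw [hμf]
    _ ≤ ‖f - g‖ * Mμ + ‖f‖ * Mν := add_le_add h1 h2
    _ ≤ (ε + δ) * Mμ + κ * Mν :=
        add_le_add (mul_le_mul_of_nonneg_right hfg hMμ0)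
          (mul_le_mul_of_nonneg_right hnorm hMν0)
  apply le_of_forall_pos_le_add
  intro δ' hδ'
  have h := hbound (δ' / (Mμ + 1)) (by positivity)
  have h2 : δ' / (Mμ + 1) * Mμ ≤ δ' := by
    rw [div_mul_eq_mul_div, div_le_iff₀ (by linarith)]
    nlinarith
  nlinarith
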